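/- Let x ∈ ℂ^{n₁×n₂} whose 2D DFT never vanishes, with gcd(s₁,n₁) = 1 and gcd(s₂,n₂) = 1 (no condition relating n₁ and n₂). Then x is uniquely determined up to global phase by the 5n₁n₂ measurements |Fx|² together with |F(x + 𝒟^{(s₁,0)}x)|², |F(x − i𝒟^{(s₁,0)}x)|², |F(x + 𝒟^{(0,s₂)}x)|², |F(x − i𝒟^{(0,s₂)}x)|². -/

import Mathlib

open Complex Finset

noncomputable def dft2 {n₁ n₂ : ℕ} [NeZero n₁] [NeZero n₂]
    (x : ZMod n₁ × ZMod n₂ → ℂ) (k : ZMod n₁ × ZMod n₂) : ℂ :=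
  (Real.sqrt (n₁ * n₂))⁻¹ * ∑ t : ZMod n₁ × ZMod n₂,
    x t * Complex.exp (-(2 * Real.pi * Complex.I) *
      ((k.1.val : ℂ) * (t.1.val : ℂ) / n₁ + (k.2.val : ℂ) * (t.2.val : ℂ) / n₂))

noncomputable def modulate2 {n₁ n₂ : ℕ} [NeZero n₁] [NeZero n₂] (s₁ s₂ : ℤ)
    (x : ZMod n₁ × ZMod n₂ → ℂ) : ZMod n₁ × ZMod n₂ → ℂ :=
  fun t => Complex.exp (2 * Real.pi * Complex.I *
      ((s₁ : ℂ) * (t.1.val : ℂ) / n₁ + (s₂ : ℂ) * (t.2.val : ℂ) / n₂)) * x t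

namespace PR2D

/-! ### ZMod auxiliary facts -/

lemma zmod_key (n : ℕ) [NeZero n] (k : ZMod n) (s : ℤ) :
    ∃ q : ℤ, ((k.val : ℤ) - s) - (((k - (s : ZMod n)).val : ℤ)) = n * q := by
  have h : ((((k.val : ℤ) - s - (((k - (s : ZMod n)).val : ℤ))) : ℤ) : ZMod n) = 0 := by
    push_cast [ZMod.natCast_val, ZMod.cast_id]
    ring
  obtain ⟨q, hq⟩ := (ZMod.intCast_zmod_eq_zero_iff_dvd _ n).mp h
  exact ⟨q, hq⟩

lemma two_pi_I_ne_zero' : (2 : ℂ) * Real.pi * Complex.I ≠ 0 := by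
  simp [Real.pi_ne_zero, Complex.I_ne_zero, Complex.ofReal_ne_zero]

/-! ### The modulation-shift property -/

lemma dft2_modulate {n₁ n₂ : ℕ} [NeZero n₁] [NeZero n₂] (s₁ s₂ : ℤ)
    (x : ZMod n₁ × ZMod n₂ → ℂ) (k : ZMod n₁ × ZMod n₂) :
    dft2 (modulate2 s₁ s₂ x) k = dft2 x (k.1 - (s₁ : ZMod n₁), k.2 - (s₂ : ZMod n₂)) := by
  unfold dft2 modulate2
  congr 1
  apply Finset.sum_congr rfl
  intro t _
  obtain ⟨q₁, hq₁⟩ := zmod_key n₁ k.1 s₁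
  obtain ⟨q₂, hq₂⟩ := zmod_key n₂ k.2 s₂
  have hn₁ : (n₁ : ℂ) ≠ 0 := Nat.cast_ne_zero.mpr (NeZero.ne n₁)
  have hn₂ : (n₂ : ℂ) ≠ 0 := Nat.cast_ne_zero.mpr (NeZero.ne n₂)
  rw [mul_comm (Complex.exp _) (x t), mul_assoc, ← Complex.exp_add]
  congr 1
  apply Complex.exp_eq_exp_iff_exists_int.mpr
  refine ⟨-(q₁ * t.1.val + q₂ * t.2.val), ?_⟩
  have e₁ : (((k.1 - (s₁:ZMod n₁)).val : ℂ)) = (k.1.val : ℂ) - s₁ - n₁ * q₁ := by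
    have := congrArg (fun z : ℤ => (z : ℂ)) hq₁
    push_cast at this ⊢
    linear_combination (-1 : ℂ) * this
  have e₂ : (((k.2 - (s₂:ZMod n₂)).val : ℂ)) = (k.2.val : ℂ) - s₂ - n₂ * q₂ := by
    have := congrArg (fun z : ℤ => (z : ℂ)) hq₂
    push_cast at this ⊢
    linear_combination (-1 : ℂ) * this
  rw [e₁, e₂]
  field_simp
  push_cast
  ring

/-! ### Orthogonality of characters and injectivity of `dft2` -/

noncomputable def ker (n : ℕ) (k a : ZMod n) : ℂ :=
  Complex.exp (-(2 * Real.pi * Complex.I) * ((k.val : ℂ) * (a.val : ℂ) / n))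

lemma sum_zmod_eq_range {n : ℕ} [NeZero n] (f : ℕ → ℂ) :
    ∑ k : ZMod n, f k.val = ∑ j ∈ Finset.range n, f j := by
  refine Finset.sum_bij' (fun (k : ZMod n) _ => k.val) (fun j _ => (j : ZMod n))
    (fun k _ => Finset.mem_range.mpr (ZMod.val_lt k)) (fun j _ => Finset.mem_univ _)
    (fun k _ => ?_) (fun j hj => ZMod.val_cast_of_lt (Finset.mem_range.mp hj))
    (fun k _ => rfl)
  exact ZMod.natCast_rightInverse k

lemma orth (n : ℕ) [NeZero n] (a b : ZMod n) :
    ∑ k : ZMod n, ker n k a * (starRingEnd ℂ) (ker n k b) = if a = b then (n : ℂ) else 0 := by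
  have hn : (n : ℂ) ≠ 0 := Nat.cast_ne_zero.mpr (NeZero.ne n)
  set m : ℤ := (a.val : ℤ) - (b.val : ℤ) with hm
  have hconj : ∀ k : ZMod n, (starRingEnd ℂ) (ker n k b)
      = Complex.exp ((2 * Real.pi * Complex.I) * ((k.val : ℂ) * (b.val : ℂ) / n)) := by
    intro k
    rw [ker, ← Complex.exp_conj]
    congr 1
    simp only [map_mul, map_div₀, map_neg, map_ofNat, Complex.conj_ofReal, Complex.conj_I,
      Complex.conj_natCast]
    ring
  have hterm : ∀ k : ZMod n, ker n k a * (starRingEnd ℂ) (ker n k b)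
      = Complex.exp (-(2 * Real.pi * Complex.I) * ((m : ℂ) / n)) ^ k.val := by
    intro k
    rw [hconj, ker, ← Complex.exp_add, ← Complex.exp_nat_mul]
    congr 1
    rw [hm]
    push_cast
    generalize (a.val : ℂ) = A
    generalize (b.val : ℂ) = B
    generalize (k.val : ℂ) = K
    field_simp
    ring
  simp_rw [hterm]
  rw [sum_zmod_eq_range (fun j => Complex.exp (-(2 * Real.pi * Complex.I) * ((m : ℂ) / n)) ^ j)]
  by_cases hab : a = b
  · subst hab
    simp [hm]
  · rw [if_neg hab]
    have hm0 : m ≠ 0 := by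
      intro h
      exact hab (ZMod.val_injective n (by omega))
    have hmlt : m.natAbs < n := by
      have := ZMod.val_lt a; have := ZMod.val_lt b; omega
    have hω : Complex.exp (-(2 * Real.pi * Complex.I) * ((m : ℂ) / n)) ≠ 1 := by
      intro h
      obtain ⟨q, hq⟩ := Complex.exp_eq_one_iff.mp h
      have key : (2 * Real.pi * Complex.I) * ((m : ℂ)) = (2 * Real.pi * Complex.I) * (-q * n) := by
        field_simp at hq
        linear_combination (-(2 * Real.pi * Complex.I)) * hq
      have hMZ : m = -q * n := by
        have h' := mul_left_cancel₀ two_pi_I_ne_zero' key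
        exact_mod_cast h'
      have hNA : m.natAbs = q.natAbs * n := by
        rw [hMZ]
        simp [Int.natAbs_mul]
      rcases Nat.eq_zero_or_pos q.natAbs with h0 | hpos
      · rw [h0, zero_mul] at hNA
        exact hm0 (Int.natAbs_eq_zero.mp hNA)
      · have : n ≤ m.natAbs := hNA ▸ Nat.le_mul_of_pos_left n hpos
        omega
    have hωn : Complex.exp (-(2 * Real.pi * Complex.I) * ((m : ℂ) / n)) ^ n = 1 := by
      rw [← Complex.exp_nat_mul]
      have : (n : ℂ) * (-(2 * Real.pi * Complex.I) * ((m : ℂ) / n))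
          = ((-m : ℤ) : ℂ) * (2 * Real.pi * Complex.I) := by
        push_cast
        field_simp
      rw [this]
      exact Complex.exp_int_mul_two_pi_mul_I _
    rw [geom_sum_eq hω, hωn]
    simp

lemma dft2_eq_ker {n₁ n₂ : ℕ} [NeZero n₁] [NeZero n₂]
    (x : ZMod n₁ × ZMod n₂ → ℂ) (k : ZMod n₁ × ZMod n₂) :
    dft2 x k = (Real.sqrt (n₁ * n₂))⁻¹ *
      ∑ t : ZMod n₁ × ZMod n₂, x t * (ker n₁ k.1 t.1 * ker n₂ k.2 t.2) := by
  unfold dft2 ker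
  congr 1
  apply Finset.sum_congr rfl
  intro t _
  rw [← Complex.exp_add, mul_add]

lemma dft2_zero_of_forall {n₁ n₂ : ℕ} [NeZero n₁] [NeZero n₂]
    (z : ZMod n₁ × ZMod n₂ → ℂ) (h : ∀ k, dft2 z k = 0) : ∀ t, z t = 0 := by
  have hn₁ : (n₁ : ℂ) ≠ 0 := Nat.cast_ne_zero.mpr (NeZero.ne n₁)
  have hn₂ : (n₂ : ℂ) ≠ 0 := Nat.cast_ne_zero.mpr (NeZero.ne n₂)
  have hsqr : (0:ℝ) < Real.sqrt ((n₁ : ℝ) * n₂) := by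
    apply Real.sqrt_pos.mpr
    have ha : (0:ℝ) < n₁ := by exact_mod_cast Nat.pos_of_ne_zero (NeZero.ne n₁)
    have hb : (0:ℝ) < n₂ := by exact_mod_cast Nat.pos_of_ne_zero (NeZero.ne n₂)
    exact mul_pos ha hb
  have hS : ∀ k : ZMod n₁ × ZMod n₂,
      ∑ t : ZMod n₁ × ZMod n₂, z t * (ker n₁ k.1 t.1 * ker n₂ k.2 t.2) = 0 := by
    intro k
    have := h k
    rw [dft2_eq_ker] at this
    rcases mul_eq_zero.mp this with h' | h'
    · exact absurd h' (by exact_mod_cast inv_ne_zero (ne_of_gt hsqr))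
    · exact h'
  intro t₀
  have key : ∑ k : ZMod n₁ × ZMod n₂,
      (∑ t : ZMod n₁ × ZMod n₂, z t * (ker n₁ k.1 t.1 * ker n₂ k.2 t.2)) *
        (starRingEnd ℂ) (ker n₁ k.1 t₀.1 * ker n₂ k.2 t₀.2) = 0 := by
    apply Finset.sum_eq_zero
    intro k _
    rw [hS k, zero_mul]
  rw [show (∑ k : ZMod n₁ × ZMod n₂,
      (∑ t : ZMod n₁ × ZMod n₂, z t * (ker n₁ k.1 t.1 * ker n₂ k.2 t.2)) *
        (starRingEnd ℂ) (ker n₁ k.1 t₀.1 * ker n₂ k.2 t₀.2))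
      = (n₁ * n₂ : ℂ) * z t₀ from ?_] at key
  · rcases mul_eq_zero.mp key with h' | h'
    · exact absurd h' (by simp [hn₁, hn₂])
    · exact h'
  · -- swap sums and use orthogonality
    simp_rw [Finset.sum_mul]
    rw [Finset.sum_comm]
    have inner : ∀ t : ZMod n₁ × ZMod n₂,
        ∑ k : ZMod n₁ × ZMod n₂, z t * (ker n₁ k.1 t.1 * ker n₂ k.2 t.2) *
          (starRingEnd ℂ) (ker n₁ k.1 t₀.1 * ker n₂ k.2 t₀.2)
        = z t * ((if t.1 = t₀.1 then (n₁:ℂ) else 0) * (if t.2 = t₀.2 then (n₂:ℂ) else 0)) := by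
      intro t
      calc ∑ k : ZMod n₁ × ZMod n₂, z t * (ker n₁ k.1 t.1 * ker n₂ k.2 t.2) *
              (starRingEnd ℂ) (ker n₁ k.1 t₀.1 * ker n₂ k.2 t₀.2)
          = ∑ k₁ : ZMod n₁, ∑ k₂ : ZMod n₂, z t * (ker n₁ k₁ t.1 * ker n₂ k₂ t.2) *
              (starRingEnd ℂ) (ker n₁ k₁ t₀.1 * ker n₂ k₂ t₀.2) := Fintype.sum_prod_type _
        _ = ∑ k₁ : ZMod n₁, (z t * (ker n₁ k₁ t.1 * (starRingEnd ℂ) (ker n₁ k₁ t₀.1))) *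
              (∑ k₂ : ZMod n₂, ker n₂ k₂ t.2 * (starRingEnd ℂ) (ker n₂ k₂ t₀.2)) := by
            refine Finset.sum_congr rfl fun k₁ _ => ?_
            rw [Finset.mul_sum]
            refine Finset.sum_congr rfl fun k₂ _ => ?_
            simp only [map_mul]
            ring
        _ = (∑ k₁ : ZMod n₁, ker n₁ k₁ t.1 * (starRingEnd ℂ) (ker n₁ k₁ t₀.1)) *
              (∑ k₂ : ZMod n₂, ker n₂ k₂ t.2 * (starRingEnd ℂ) (ker n₂ k₂ t₀.2)) * z t := by
            rw [← Finset.sum_mul, ← Finset.mul_sum]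
            ring
        _ = z t * ((if t.1 = t₀.1 then (n₁:ℂ) else 0) * (if t.2 = t₀.2 then (n₂:ℂ) else 0)) := by
            rw [orth, orth]
            ring
    simp_rw [inner]
    rw [Finset.sum_eq_single t₀]
    · simp [mul_comm]
    · intro t _ ht
      have : t.1 ≠ t₀.1 ∨ t.2 ≠ t₀.2 := by
        by_contra hc
        push_neg at hc
        exact ht (Prod.ext hc.1 hc.2)
      rcases this with h' | h' <;> simp [h']
    · intro h'
      exact absurd (Finset.mem_univ t₀) h'

/-! ### Linearity of dft2 -/

lemma dft2_sub {n₁ n₂ : ℕ} [NeZero n₁] [NeZero n₂]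
    (f g : ZMod n₁ × ZMod n₂ → ℂ) (k : ZMod n₁ × ZMod n₂) :
    dft2 (fun t => f t - g t) k = dft2 f k - dft2 g k := by
  unfold dft2
  rw [← mul_sub, ← Finset.sum_sub_distrib]
  congr 1
  apply Finset.sum_congr rfl
  intro t _
  ring

lemma dft2_add {n₁ n₂ : ℕ} [NeZero n₁] [NeZero n₂]
    (f g : ZMod n₁ × ZMod n₂ → ℂ) (k : ZMod n₁ × ZMod n₂) :
    dft2 (fun t => f t + g t) k = dft2 f k + dft2 g k := by
  unfold dft2
  rw [← mul_add, ← Finset.sum_add_distrib]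
  congr 1
  apply Finset.sum_congr rfl
  intro t _
  ring

lemma dft2_const_mul {n₁ n₂ : ℕ} [NeZero n₁] [NeZero n₂]
    (c : ℂ) (f : ZMod n₁ × ZMod n₂ → ℂ) (k : ZMod n₁ × ZMod n₂) :
    dft2 (fun t => c * f t) k = c * dft2 f k := by
  unfold dft2
  simp_rw [mul_assoc, ← Finset.mul_sum]
  ring

/-! ### Polarization -/

lemma polar {u v u' v' : ℂ} (h0 : Norm.norm u' = Norm.norm u)
    (h0' : Norm.norm v' = Norm.norm v)
    (ha : Norm.norm (u' + v') = Norm.norm (u + v))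
    (hb : Norm.norm (u' - Complex.I * v') = Norm.norm (u - Complex.I * v)) :
    u' * (starRingEnd ℂ) v' = u * (starRingEnd ℂ) v := by
  have nsq : ∀ {z w : ℂ}, Norm.norm z = Norm.norm w → Complex.normSq z = Complex.normSq w := by
    intro z w h
    rw [← Complex.sq_norm, ← Complex.sq_norm, h]
  have e0 := nsq h0
  have e0' := nsq h0'
  have ea := nsq ha
  have eb := nsq hb
  rw [Complex.normSq_add, Complex.normSq_add] at ea
  rw [Complex.normSq_sub, Complex.normSq_sub] at eb
  have hI : ∀ p r : ℂ, (p * (starRingEnd ℂ) (Complex.I * r)).re = (p * (starRingEnd ℂ) r).im := by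
    intro p r
    simp only [map_mul, Complex.conj_I, Complex.mul_re, Complex.mul_im, Complex.neg_re,
      Complex.neg_im, Complex.I_re, Complex.I_im]
    ring
  have hIsq : ∀ r : ℂ, Complex.normSq (Complex.I * r) = Complex.normSq r := by
    intro r
    simp [Complex.normSq_mul]
  rw [hI, hI, hIsq, hIsq, e0, e0'] at eb
  rw [e0, e0'] at ea
  apply Complex.ext
  · linarith
  · linarith

/-! ### Units of ZMod from integer gcd -/

lemma isUnit_int_cast {n : ℕ} [NeZero n] {s : ℤ} (hs : Int.gcd s n = 1) :
    IsUnit ((s : ZMod n)) := by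
  have hcop : Nat.Coprime s.natAbs n := by
    simpa [Int.gcd] using hs
  rcases Int.natAbs_eq s with h | h
  · rw [h, Int.cast_natCast]
    exact (ZMod.isUnit_iff_coprime s.natAbs n).mpr hcop
  · rw [h, Int.cast_neg, Int.cast_natCast]
    exact ((ZMod.isUnit_iff_coprime s.natAbs n).mpr hcop).neg

lemma exists_nat_mul {n : ℕ} [NeZero n] {s : ZMod n} (hs : IsUnit s) (a : ZMod n) :
    ∃ m : ℕ, (m : ZMod n) * s = a := by
  obtain ⟨u, hu⟩ := hs
  refine ⟨(a * ↑u⁻¹).val, ?_⟩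
  rw [ZMod.natCast_val, ZMod.cast_id, ← hu, mul_assoc]
  simp

end PR2D

open PR2D in
theorem phase_retrieval_2D_five (n₁ n₂ : ℕ) [NeZero n₁] [NeZero n₂] (s₁ s₂ : ℤ)
    (hs₁ : Int.gcd s₁ n₁ = 1) (hs₂ : Int.gcd s₂ n₂ = 1)
    (x y : ZMod n₁ × ZMod n₂ → ℂ) (hx : ∀ k, dft2 x k ≠ 0)
    (h1 : ∀ k, Norm.norm (dft2 y k) = Norm.norm (dft2 x k))
    (h2 : ∀ k, Norm.norm (dft2 (fun t => y t + modulate2 s₁ 0 y t) k) =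
               Norm.norm (dft2 (fun t => x t + modulate2 s₁ 0 x t) k))
    (h3 : ∀ k, Norm.norm (dft2 (fun t => y t - Complex.I * modulate2 s₁ 0 y t) k) =
               Norm.norm (dft2 (fun t => x t - Complex.I * modulate2 s₁ 0 x t) k))
    (h4 : ∀ k, Norm.norm (dft2 (fun t => y t + modulate2 0 s₂ y t) k) =
               Norm.norm (dft2 (fun t => x t + modulate2 0 s₂ x t) k))
    (h5 : ∀ k, Norm.norm (dft2 (fun t => y t - Complex.I * modulate2 0 s₂ y t) k) =
               Norm.norm (dft2 (fun t => x t - Complex.I * modulate2 0 s₂ x t) k)) :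
    ∃ c : ℂ, Norm.norm c = 1 ∧ y = fun t => c * x t := by
  classical
  set X : ZMod n₁ × ZMod n₂ → ℂ := dft2 x with hX
  set Y : ZMod n₁ × ZMod n₂ → ℂ := dft2 y with hY
  set σ₁ : ZMod n₁ × ZMod n₂ → ZMod n₁ × ZMod n₂ := fun k => (k.1 - (s₁ : ZMod n₁), k.2) with hσ₁
  set σ₂ : ZMod n₁ × ZMod n₂ → ZMod n₁ × ZMod n₂ := fun k => (k.1, k.2 - (s₂ : ZMod n₂)) with hσ₂
  -- shift identities
  have hmod1 : ∀ (w : ZMod n₁ × ZMod n₂ → ℂ) k, dft2 (modulate2 s₁ 0 w) k = dft2 w (σ₁ k) := by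
    intro w k
    rw [dft2_modulate]
    simp [hσ₁]
  have hmod2 : ∀ (w : ZMod n₁ × ZMod n₂ → ℂ) k, dft2 (modulate2 0 s₂ w) k = dft2 w (σ₂ k) := by
    intro w k
    rw [dft2_modulate]
    simp [hσ₂]
  -- derived relations between transforms
  have hstep1 : ∀ k, Y k * (starRingEnd ℂ) (Y (σ₁ k)) = X k * (starRingEnd ℂ) (X (σ₁ k)) := by
    intro k
    apply polar (h1 k) (h1 (σ₁ k))
    · have := h2 k
      rwa [dft2_add, dft2_add, hmod1 y, hmod1 x] at this
    · have := h3 k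
      rw [dft2_sub y (fun t => Complex.I * modulate2 s₁ 0 y t) k,
          dft2_sub x (fun t => Complex.I * modulate2 s₁ 0 x t) k,
          dft2_const_mul, dft2_const_mul, hmod1 y, hmod1 x] at this
      exact this
  have hstep2 : ∀ k, Y k * (starRingEnd ℂ) (Y (σ₂ k)) = X k * (starRingEnd ℂ) (X (σ₂ k)) := by
    intro k
    apply polar (h1 k) (h1 (σ₂ k))
    · have := h4 k
      rwa [dft2_add, dft2_add, hmod2 y, hmod2 x] at this
    · have := h5 k
      rw [dft2_sub y (fun t => Complex.I * modulate2 0 s₂ y t) k,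
          dft2_sub x (fun t => Complex.I * modulate2 0 s₂ x t) k,
          dft2_const_mul, dft2_const_mul, hmod2 y, hmod2 x] at this
      exact this
  -- the ratio function
  set c : ZMod n₁ × ZMod n₂ → ℂ := fun k => Y k / X k with hc
  have hYc : ∀ k, Y k = c k * X k := by
    intro k
    show Y k = Y k / X k * X k
    exact (div_mul_cancel₀ (Y k) (hx k)).symm
  have habs : ∀ k, Norm.norm (c k) = 1 := by
    intro k
    rw [hc]
    simp only [norm_div]
    rw [h1 k]
    exact div_self (norm_ne_zero_iff.mpr (hx k))
  have hmulconj : ∀ k, c k * (starRingEnd ℂ) (c k) = 1 := by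
    intro k
    rw [Complex.mul_conj]
    norm_cast
    rw [Complex.normSq_eq_norm_sq, habs k]
    norm_num
  have hcc : ∀ (σ : ZMod n₁ × ZMod n₂ → ZMod n₁ × ZMod n₂)
      (hst : ∀ k, Y k * (starRingEnd ℂ) (Y (σ k)) = X k * (starRingEnd ℂ) (X (σ k))),
      ∀ k, c k = c (σ k) := by
    intro σ hst k
    have h := hst k
    rw [hYc k, hYc (σ k), map_mul] at h
    have hXne : X k * (starRingEnd ℂ) (X (σ k)) ≠ 0 :=
      mul_ne_zero (hx k) (star_ne_zero.mpr (hx (σ k)))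
    have h1' : c k * (starRingEnd ℂ) (c (σ k)) = 1 := by
      have : (c k * (starRingEnd ℂ) (c (σ k))) * (X k * (starRingEnd ℂ) (X (σ k)))
          = 1 * (X k * (starRingEnd ℂ) (X (σ k))) := by
        rw [one_mul]
        calc (c k * (starRingEnd ℂ) (c (σ k))) * (X k * (starRingEnd ℂ) (X (σ k)))
            = (c k * X k) * ((starRingEnd ℂ) (c (σ k)) * (starRingEnd ℂ) (X (σ k))) := by ring
          _ = X k * (starRingEnd ℂ) (X (σ k)) := by rw [← map_mul]; rw [← hYc k, ← hYc (σ k)]; exact hst k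
      exact mul_right_cancel₀ hXne this
    calc c k = c k * ((starRingEnd ℂ) (c (σ k)) * c (σ k)) := by
          rw [mul_comm ((starRingEnd ℂ) (c (σ k))), hmulconj]; ring
      _ = (c k * (starRingEnd ℂ) (c (σ k))) * c (σ k) := by ring
      _ = c (σ k) := by rw [h1']; ring
  have hc1 : ∀ k, c k = c (σ₁ k) := hcc σ₁ hstep1
  have hc2 : ∀ k, c k = c (σ₂ k) := hcc σ₂ hstep2
  -- constancy via generation
  have hgen1 : ∀ (w : ZMod n₁ × ZMod n₂) (m : ℕ), c w = c (w.1 - m * (s₁ : ZMod n₁), w.2) := by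
    intro w m
    induction m with
    | zero => simp
    | succ m ih =>
      rw [ih, hc1 (w.1 - m * (s₁ : ZMod n₁), w.2)]
      have : w.1 - (m : ZMod n₁) * (s₁ : ZMod n₁) - (s₁ : ZMod n₁)
          = w.1 - ((m : ℕ) + 1 : ZMod n₁) * (s₁ : ZMod n₁) := by ring
      simp only [hσ₁]
      rw [this]
      push_cast
      ring_nf
  have hgen2 : ∀ (w : ZMod n₁ × ZMod n₂) (m : ℕ), c w = c (w.1, w.2 - m * (s₂ : ZMod n₂)) := by
    intro w m
    induction m with
    | zero => simp
    | succ m ih =>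
      rw [ih, hc2 (w.1, w.2 - m * (s₂ : ZMod n₂))]
      have : w.2 - (m : ZMod n₂) * (s₂ : ZMod n₂) - (s₂ : ZMod n₂)
          = w.2 - ((m : ℕ) + 1 : ZMod n₂) * (s₂ : ZMod n₂) := by ring
      simp only [hσ₂]
      rw [this]
      push_cast
      ring_nf
  have hu₁ : IsUnit ((s₁ : ZMod n₁)) := isUnit_int_cast hs₁
  have hu₂ : IsUnit ((s₂ : ZMod n₂)) := isUnit_int_cast hs₂
  have hconst : ∀ k, c k = c (0, 0) := by
    intro k
    obtain ⟨m₁, hm₁⟩ := exists_nat_mul hu₁ k.1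
    obtain ⟨m₂, hm₂⟩ := exists_nat_mul hu₂ k.2
    have e1 : c k = c (0, k.2) := by
      have := hgen1 k m₁
      rwa [hm₁, sub_self] at this
    have e2 : c (0, k.2) = c (0, 0) := by
      have := hgen2 ((0 : ZMod n₁), k.2) m₂
      simp only at this
      rwa [hm₂, sub_self] at this
    rw [e1, e2]
  refine ⟨c (0, 0), habs (0, 0), ?_⟩
  have hYX : ∀ k, Y k = c (0, 0) * X k := by
    intro k
    rw [hYc k, hconst k]
  have hz : ∀ k, dft2 (fun t => y t - c (0, 0) * x t) k = 0 := by
    intro k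
    rw [dft2_sub y (fun t => c (0, 0) * x t) k, dft2_const_mul]
    rw [← hX, ← hY, hYX k]
    ring
  funext t
  have := dft2_zero_of_forall (fun t => y t - c (0, 0) * x t) hz t
  have h0 := sub_eq_zero.mp this
  exact h0
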